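/- Let a, b > 0 be real constants and let c₁, c₂, c₃ ∈ ℝ. Define ξ(t,x) = (1/2)c₁x² + c₁t⁴/b - 2c₁a²t²/b - (2b²+9)c₁t²/18 + c₂t/3 + c₃ and η(t,x) = -(2b/3)c₁x² + (c₁(t³-a²t)/b - (2b²+9)c₁t/9 + c₂/3)·x. If ξ and η satisfy the fourth determining equation ξ·(a²-3t²)·x + 2η·(t³-a²t-x) + η·x + η_tt·x³ + (η_x - 2ξ_t)·(t³-a²t-x)·x + b·η_t·x² = 0 for all (t,x) ∈ ℝ², then c₁ = c₂ = c₃ = 0. -/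

import Mathlib

lemma hasDerivAt_quartic (α β γ δ ε s : ℝ) :
    HasDerivAt (fun r : ℝ => α * r ^ 4 + β * r ^ 3 + γ * r ^ 2 + δ * r + ε)
      (4 * α * s ^ 3 + 3 * β * s ^ 2 + 2 * γ * s + δ) s := by
  have h := (((((hasDerivAt_pow 4 s).const_mul α).add
      ((hasDerivAt_pow 3 s).const_mul β)).add
      ((hasDerivAt_pow 2 s).const_mul γ)).add
      ((hasDerivAt_id s).const_mul δ)).add_const ε
  refine h.congr_deriv ?_
  push_cast
  ring

theorem stmt_5 (a b c₁ c₂ c₃ : ℝ) (ha : 0 < a) (hb : 0 < b)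
    (ξ η : ℝ → ℝ → ℝ)
    (hξ : ∀ t x : ℝ, ξ t x = (1 / 2) * c₁ * x ^ 2 + c₁ * t ^ 4 / b
      - 2 * c₁ * a ^ 2 * t ^ 2 / b - (2 * b ^ 2 + 9) * c₁ * t ^ 2 / 18 + c₂ * t / 3 + c₃)
    (hη : ∀ t x : ℝ, η t x = -(2 * b / 3) * c₁ * x ^ 2
      + (c₁ * (t ^ 3 - a ^ 2 * t) / b - (2 * b ^ 2 + 9) * c₁ * t / 9 + c₂ / 3) * x)
    (heq : ∀ t x : ℝ,
      ξ t x * (a ^ 2 - 3 * t ^ 2) * x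
        + 2 * η t x * (t ^ 3 - a ^ 2 * t - x)
        + η t x * x
        + deriv (fun s => deriv (fun r => η r x) s) t * x ^ 3
        + (deriv (fun y => η t y) x - 2 * deriv (fun s => ξ s x) t)
            * (t ^ 3 - a ^ 2 * t - x) * x
        + b * deriv (fun s => η s x) t * x ^ 2 = 0) :
    c₁ = 0 ∧ c₂ = 0 ∧ c₃ = 0 := by
  have hb0 : b ≠ 0 := ne_of_gt hb
  have dη1 : ∀ t x : ℝ, deriv (fun r => η r x) t
      = 3 * (c₁ * x / b) * t ^ 2 + (-(c₁ * a ^ 2 / b) - (2 * b ^ 2 + 9) * c₁ / 9) * x := by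
    intro t x
    have hf : (fun r => η r x) = fun r : ℝ => 0 * r ^ 4 + (c₁ * x / b) * r ^ 3 + 0 * r ^ 2
        + ((-(c₁ * a ^ 2 / b) - (2 * b ^ 2 + 9) * c₁ / 9) * x) * r
        + (-(2 * b / 3) * c₁ * x ^ 2 + c₂ / 3 * x) := by
      funext r; rw [hη]; ring
    rw [hf, (hasDerivAt_quartic _ _ _ _ _ t).deriv]; ring
  have dη2 : ∀ t x : ℝ, deriv (fun s => deriv (fun r => η r x) s) t = 6 * (c₁ * x / b) * t := by
    intro t x
    have hf : (fun s => deriv (fun r => η r x) s) = fun s : ℝ => 0 * s ^ 4 + 0 * s ^ 3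
        + (3 * (c₁ * x / b)) * s ^ 2 + 0 * s
        + (-(c₁ * a ^ 2 / b) - (2 * b ^ 2 + 9) * c₁ / 9) * x := by
      funext s; rw [dη1]; ring
    rw [hf, (hasDerivAt_quartic _ _ _ _ _ t).deriv]; ring
  have dηx : ∀ t x : ℝ, deriv (fun y => η t y) x
      = -(4 * b / 3) * c₁ * x
        + (c₁ * (t ^ 3 - a ^ 2 * t) / b - (2 * b ^ 2 + 9) * c₁ * t / 9 + c₂ / 3) := by
    intro t x
    have hf : (fun y => η t y) = fun y : ℝ => 0 * y ^ 4 + 0 * y ^ 3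
        + (-(2 * b / 3) * c₁) * y ^ 2
        + (c₁ * (t ^ 3 - a ^ 2 * t) / b - (2 * b ^ 2 + 9) * c₁ * t / 9 + c₂ / 3) * y + 0 := by
      funext y; rw [hη]; ring
    rw [hf, (hasDerivAt_quartic _ _ _ _ _ x).deriv]; ring
  have dξt : ∀ t x : ℝ, deriv (fun s => ξ s x) t
      = 4 * (c₁ / b) * t ^ 3
        + 2 * (-(2 * c₁ * a ^ 2 / b) - (2 * b ^ 2 + 9) * c₁ / 18) * t + c₂ / 3 := by
    intro t x
    have hf : (fun s => ξ s x) = fun s : ℝ => (c₁ / b) * s ^ 4 + 0 * s ^ 3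
        + (-(2 * c₁ * a ^ 2 / b) - (2 * b ^ 2 + 9) * c₁ / 18) * s ^ 2
        + (c₂ / 3) * s + ((1 / 2) * c₁ * x ^ 2 + c₃) := by
      funext s; rw [hξ]; ring
    rw [hf, (hasDerivAt_quartic _ _ _ _ _ t).deriv]; ring
  have H : ∀ t x : ℝ,
      c₃ * (a ^ 2 * x - 3 * t ^ 2 * x)
      + c₂ * (-(2 / 3) * t ^ 3 * x)
      + c₁ * (-(1 / 2) * a ^ 2 * x ^ 3 + b * x ^ 3 - (2 / 9) * b ^ 3 * x ^ 3
          + ((8 / 3) * a ^ 2 * b - 6 * a ^ 2 / b) * t * x ^ 2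
          + 6 * t * x ^ 4 / b
          + (-(7 * a ^ 4 / b) + a ^ 2 * b ^ 2 / 9 + a ^ 2 / 2) * t ^ 2 * x
          + (3 / 2) * t ^ 2 * x ^ 3
          + (-(8 / 3) * b + 6 / b) * t ^ 3 * x ^ 2
          + (17 * a ^ 2 / b + b ^ 2 / 9 + 1 / 2) * t ^ 4 * x
          - 8 * t ^ 6 * x / b)
      + c₁ * ((a ^ 2 * x ^ 3 - 3 * t ^ 2 * x ^ 3)
          - b * (a ^ 2 * x ^ 3 - 3 * t ^ 2 * x ^ 3) / b) = 0 := by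
    intro t x
    have h := heq t x
    rw [dη2, dη1, dηx, dξt, hξ, hη] at h
    linear_combination h
  have h6 : (144 : ℝ) * c₁ / b = 0 := by
    linear_combination H 1 2 + H 1 (-2) - 4 * H 1 1 - 4 * H 1 (-1)
  have hc1 : c₁ = 0 := by
    rw [div_eq_zero_iff] at h6
    rcases h6 with h | h
    · linarith
    · exact absurd h hb0
  subst hc1
  have hc3 : c₃ = 0 := by
    have h30 : a ^ 2 * c₃ = 0 := by linear_combination H 0 1
    rcases mul_eq_zero.mp h30 with h | h
    · exact absurd h (pow_ne_zero 2 ha.ne')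
    · exact h
  subst hc3
  have hc2 : c₂ = 0 := by
    linear_combination (-3 / 2 : ℝ) * H 1 1
  exact ⟨rfl, hc2, rfl⟩
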